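/- Fix a real κ with 4 < κ < 8. There exists a constant C = C(κ) ∈ (0,∞), independent of b, such that for every b ∈ (0,1): lim_{s→0⁺} s^{8/κ−2} · Z(s,b) / (C_κ · ∫₁^∞ f(0,s,1;v) dv) = C · b^{1−4/κ}·(1−b)^{1−4/κ}, where C_κ = B(1−4/κ, 8/κ−1). Explicitly, C = I(κ)/(C_κ · B(1−4/κ, 12/κ−1)) with I(κ) = ∫₁^∞ ∫_{v₂}^∞ (v₁−1)^{−4/κ}(v₂−1)^{−4/κ}(v₁−v₂)^{8/κ}v₁^{−2}v₂^{−2} dv₁ dv₂. -/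

import Mathlib

open MeasureTheory Set

lemma real_beta {u v : ℝ} (hu : 0 < u) (hv : 0 < v) :
    ∫ x in Set.Ioo (0:ℝ) 1, x ^ (u - 1) * (1 - x) ^ (v - 1) =
      Real.Gamma u * Real.Gamma v / Real.Gamma (u + v) := by
  have h1 : Complex.Gamma u * Complex.Gamma v
      = Complex.Gamma (u + v) * Complex.betaIntegral u v := by
    have := Complex.Gamma_mul_Gamma_eq_betaIntegral (s := (u:ℂ)) (t := (v:ℂ))
      (by simpa using hu) (by simpa using hv)
    rw [this]; try push_cast; try ring
  have h2 : Complex.betaIntegral u v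
      = ((∫ x in Set.Ioo (0:ℝ) 1, x ^ (u - 1) * (1 - x) ^ (v - 1) : ℝ) : ℂ) := by
    rw [Complex.betaIntegral, intervalIntegral.integral_of_le (by norm_num : (0:ℝ) ≤ 1),
      integral_Ioc_eq_integral_Ioo]
    calc (∫ x : ℝ in Set.Ioo (0:ℝ) 1, (x : ℂ) ^ ((u:ℂ) - 1) * (1 - (x:ℂ)) ^ ((v:ℂ) - 1))
        = ∫ x : ℝ in Set.Ioo (0:ℝ) 1, ((x ^ (u - 1) * (1 - x) ^ (v - 1) : ℝ) : ℂ) := by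
          refine setIntegral_congr_fun measurableSet_Ioo fun x hx => ?_
          rw [show ((u:ℂ) - 1) = ((u - 1 : ℝ) : ℂ) by push_cast; ring,
            show ((v:ℂ) - 1) = ((v - 1 : ℝ) : ℂ) by push_cast; ring,
            ← Complex.ofReal_cpow hx.1.le, ← Complex.ofReal_one, ← Complex.ofReal_sub,
            ← Complex.ofReal_cpow (by linarith [hx.2] : (0:ℝ) ≤ 1 - x)]
          push_cast; ring
      _ = _ := integral_ofReal
  rw [h2, Complex.Gamma_ofReal, Complex.Gamma_ofReal, show ((u:ℂ) + v) = ((u + v : ℝ) : ℂ) by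
    push_cast; ring, Complex.Gamma_ofReal, ← Complex.ofReal_mul, ← Complex.ofReal_mul] at h1
  have h3 := Complex.ofReal_injective h1
  have hne : Real.Gamma (u + v) ≠ 0 := (Real.Gamma_pos_of_pos (by linarith)).ne'
  field_simp [hne] at h3 ⊢
  linarith [h3]

lemma beta_Ioi {q c : ℝ} (hc : 0 < c) (hq : c < q) :
    ∫ v in Set.Ioi (1:ℝ), v ^ (-q) * (v - 1) ^ (c - 1) =
      Real.Gamma (q - c) * Real.Gamma c / Real.Gamma q := by
  set g : ℝ → ℝ := Set.indicator (Set.Ioi 1) (fun y => y ^ (-q) * (y - 1) ^ (c - 1)) with hg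
  have hcomp := MeasureTheory.integral_comp_rpow_Ioi g (p := -1) (by norm_num)
  have hRHS : (∫ y in Set.Ioi (0:ℝ), g y) = ∫ v in Set.Ioi (1:ℝ), v ^ (-q) * (v - 1) ^ (c - 1) := by
    rw [hg, setIntegral_indicator measurableSet_Ioi]
    congr 1
    rw [Set.Ioi_inter_Ioi]; norm_num
  have hLHS : (∫ x in Set.Ioi (0:ℝ), (|(-1:ℝ)| * x ^ ((-1:ℝ) - 1)) • g (x ^ (-1:ℝ)))
      = ∫ x in Set.Ioo (0:ℝ) 1, x ^ ((q - c) - 1) * (1 - x) ^ (c - 1) := by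
    have step1 : (∫ x in Set.Ioi (0:ℝ), (|(-1:ℝ)| * x ^ ((-1:ℝ) - 1)) • g (x ^ (-1:ℝ)))
        = ∫ x in Set.Ioi (0:ℝ),
            Set.indicator (Set.Ioo 0 1) (fun x => x ^ ((q - c) - 1) * (1 - x) ^ (c - 1)) x := by
      refine setIntegral_congr_fun measurableSet_Ioi fun x hx => ?_
      have hx0 : (0:ℝ) < x := hx
      simp only [abs_neg, abs_one, one_mul, smul_eq_mul, Real.rpow_neg_one, hg]
      by_cases h : x < 1
      · have hmem : x⁻¹ ∈ Set.Ioi (1:ℝ) := by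
          simp only [Set.mem_Ioi]
          exact (one_lt_inv₀ hx0).mpr h
        rw [Set.indicator_of_mem hmem, Set.indicator_of_mem (show x ∈ Set.Ioo (0:ℝ) 1 from Set.mem_Ioo.mpr ⟨hx0, h⟩)]
        have e1 : (x⁻¹) ^ (-q) = x ^ q := by
          rw [Real.inv_rpow hx0.le, Real.rpow_neg hx0.le, inv_inv]
        have e2 : x⁻¹ - 1 = (1 - x) * x⁻¹ := by field_simp
        rw [e1, e2, Real.mul_rpow (by linarith) (by positivity), Real.inv_rpow hx0.le,
          ← Real.rpow_neg hx0.le]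
        rw [show x ^ ((-1:ℝ) - 1) * (x ^ q * ((1 - x) ^ (c - 1) * x ^ (-(c - 1))))
            = (x ^ ((-1:ℝ) - 1) * x ^ q * x ^ (-(c - 1))) * (1 - x) ^ (c - 1) by ring]
        rw [← Real.rpow_add hx0, ← Real.rpow_add hx0]
        ring_nf
      · have hmem : x⁻¹ ∉ Set.Ioi (1:ℝ) := by
          simp only [Set.mem_Ioi, not_lt]
          exact inv_le_one_of_one_le₀ (le_of_not_gt h)
        rw [Set.indicator_of_notMem hmem, Set.indicator_of_notMem
          (fun hm => h (Set.mem_Ioo.mp hm).2), mul_zero]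
    rw [step1, setIntegral_indicator measurableSet_Ioo,
      Set.inter_eq_right.mpr Set.Ioo_subset_Ioi_self]
  rw [← hRHS, ← hcomp, hLHS, real_beta (by linarith) hc]
  rw [show q - c + c = q by ring]

lemma rpow_le_two_rpow_abs {x : ℝ} (b : ℝ) (h1 : 2⁻¹ ≤ x) (h2 : x ≤ 2) : x ^ b ≤ 2 ^ |b| := by
  rcases le_or_gt 0 b with hb | hb
  · rw [abs_of_nonneg hb]
    exact Real.rpow_le_rpow (by linarith) h2 hb
  · rw [abs_of_neg hb]
    calc x ^ b ≤ (2⁻¹ : ℝ) ^ b := Real.rpow_le_rpow_of_nonpos (by norm_num) h1 hb.le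
      _ = 2 ^ (-b) := by
          rw [Real.inv_rpow (by norm_num), ← Real.rpow_neg (by norm_num)]

lemma rpow_le_abs_mul {x y : ℝ} (b : ℝ) (hy : 0 < y) (h1 : x / 2 ≤ y) (h2 : y ≤ x) :
    y ^ b ≤ 2 ^ |b| * x ^ b := by
  have hx : 0 < x := lt_of_lt_of_le hy h2
  rcases le_or_gt 0 b with hb | hb
  · rw [abs_of_nonneg hb]
    calc y ^ b ≤ x ^ b := Real.rpow_le_rpow hy.le h2 hb
      _ ≤ 2 ^ b * x ^ b := by
          nlinarith [Real.one_le_rpow one_le_two hb, Real.rpow_nonneg hx.le b]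
  · rw [abs_of_neg hb]
    have hx2 : (0:ℝ) < x / 2 := by linarith
    calc y ^ b ≤ (x / 2) ^ b := Real.rpow_le_rpow_of_nonpos hx2 h1 hb.le
      _ = 2 ^ (-b) * x ^ b := by
          rw [Real.div_rpow hx.le (by norm_num), Real.rpow_neg (by norm_num)]
          ring

lemma measurable_model (a c e : ℝ) :
    Measurable (fun v : ℝ => v ^ a * (v - 2⁻¹) ^ c * (v - 1) ^ e) := by
  fun_prop

lemma integrableOn_model {a c e : ℝ} (he : -1 < e) (hsum : a + c + e < -1) :
    IntegrableOn (fun v : ℝ => v ^ a * (v - 2⁻¹) ^ c * (v - 1) ^ e) (Set.Ioi 1) volume := by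
  rw [show Set.Ioi (1:ℝ) = Set.Ioc 1 2 ∪ Set.Ioi 2 from (Set.Ioc_union_Ioi_eq_Ioi
    (by norm_num)).symm]
  apply IntegrableOn.union
  · -- near 1
    have hint : IntegrableOn (fun v : ℝ => (v - 1) ^ e) (Set.Ioc 1 2) volume := by
      have h0 : IntervalIntegrable (fun x : ℝ => x ^ e) volume 0 1 :=
        intervalIntegral.intervalIntegrable_rpow' he
      have h1 := h0.comp_sub_right 1
      rw [intervalIntegrable_iff_integrableOn_Ioc_of_le (by norm_num)] at h1
      norm_num at h1
      exact h1
    refine Integrable.mono (hint.const_mul (2 ^ |a| * 2 ^ |c|))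
      (measurable_model a c e).aestronglyMeasurable.restrict ?_
    rw [ae_restrict_iff' measurableSet_Ioc]
    refine Filter.Eventually.of_forall fun v hv => ?_
    have hv1 : (1:ℝ) < v := hv.1
    have hv2 : v ≤ 2 := hv.2
    have hb1 : v ^ a ≤ 2 ^ |a| := rpow_le_two_rpow_abs a (by linarith) hv2
    have hb2 : (v - 2⁻¹) ^ c ≤ 2 ^ |c| := rpow_le_two_rpow_abs c (by linarith) (by linarith)
    have hnn : (0:ℝ) ≤ (v - 1) ^ e := Real.rpow_nonneg (by linarith) e
    rw [Real.norm_eq_abs, Real.norm_eq_abs,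
      abs_of_nonneg (mul_nonneg (mul_nonneg (Real.rpow_nonneg (by linarith) a)
        (Real.rpow_nonneg (by linarith) c)) (Real.rpow_nonneg (by linarith) e)),
      abs_of_nonneg (mul_nonneg (by positivity) (Real.rpow_nonneg (by linarith) e))]
    calc v ^ a * (v - 2⁻¹) ^ c * (v - 1) ^ e
        ≤ 2 ^ |a| * 2 ^ |c| * (v - 1) ^ e := by
          apply mul_le_mul _ le_rfl hnn (by positivity)
          exact mul_le_mul hb1 hb2 (Real.rpow_nonneg (by linarith) c) (by positivity)
      _ = 2 ^ |a| * 2 ^ |c| * (v - 1) ^ e := rfl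
  · -- tail
    have hint : IntegrableOn (fun v : ℝ => v ^ (a + c + e)) (Set.Ioi 2) volume :=
      integrableOn_Ioi_rpow_of_lt hsum (by norm_num)
    refine Integrable.mono (hint.const_mul (2 ^ |c| * 2 ^ |e|))
      (measurable_model a c e).aestronglyMeasurable.restrict ?_
    rw [ae_restrict_iff' measurableSet_Ioi]
    refine Filter.Eventually.of_forall fun v hv => ?_
    have hv2 : (2:ℝ) < v := hv
    have hb2 : (v - 2⁻¹) ^ c ≤ 2 ^ |c| * v ^ c :=
      rpow_le_abs_mul c (by linarith) (by linarith) (by linarith)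
    have hb3 : (v - 1) ^ e ≤ 2 ^ |e| * v ^ e :=
      rpow_le_abs_mul e (by linarith) (by linarith) (by linarith)
    rw [Real.norm_eq_abs, Real.norm_eq_abs,
      abs_of_nonneg (mul_nonneg (mul_nonneg (Real.rpow_nonneg (by linarith) a)
        (Real.rpow_nonneg (by linarith) c)) (Real.rpow_nonneg (by linarith) e)),
      abs_of_nonneg (mul_nonneg (by positivity) (Real.rpow_nonneg (by linarith) (a+c+e)))]
    calc v ^ a * (v - 2⁻¹) ^ c * (v - 1) ^ e
        ≤ v ^ a * (2 ^ |c| * v ^ c) * (2 ^ |e| * v ^ e) := by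
          apply mul_le_mul _ hb3 (Real.rpow_nonneg (by linarith) e) (by positivity)
          exact mul_le_mul le_rfl hb2 (Real.rpow_nonneg (by linarith) c) (by positivity)
      _ = 2 ^ |c| * 2 ^ |e| * v ^ (a + c + e) := by
          rw [Real.rpow_add (show (0:ℝ) < v by linarith) (a+c) e,
            Real.rpow_add (show (0:ℝ) < v by linarith) a c]
          ring

noncomputable def SLEhh (κ s v : ℝ) : ℝ :=
  v ^ (-(4/κ)) * (v - s) ^ (-(4/κ)) * (v - 1) ^ (-(4/κ))

noncomputable def SLEhbar (κ v : ℝ) : ℝ :=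
  v ^ (-(4/κ)) * (v - 2⁻¹) ^ (-(4/κ)) * (v - 1) ^ (-(4/κ))

noncomputable def SLEphi1 (κ v : ℝ) : ℝ :=
  v ^ (4/κ) * (v - 2⁻¹) ^ (4/κ - 2) * (v - 1) ^ (-(4/κ))

noncomputable def SLEphi2 (κ v : ℝ) : ℝ :=
  v ^ (-(4/κ)) * (v - 2⁻¹) ^ (4/κ - 2) * (v - 1) ^ (-(4/κ))

noncomputable def SLEgg (κ b s v₂ v₁ : ℝ) : ℝ :=
  v₁ ^ (-(4/κ)) * (v₁ - s) ^ (-(4/κ)) * (v₁ - 1) ^ (-(4/κ))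
    * (v₂ ^ (-(4/κ)) * (v₂ - s) ^ (-(4/κ)) * (v₂ - 1) ^ (-(4/κ)))
    * (v₁ - v₂) ^ (8/κ) * (v₁ - b * s) ^ (8/κ - 2) * (v₂ - b * s) ^ (8/κ - 2)

section facts
variable {κ b s v v₁ v₂ : ℝ} (h1 : 4 < κ) (h2 : κ < 8)
include h1 h2

lemma kpos : (0:ℝ) < κ := by linarith

lemma kfact1 : (0:ℝ) < 4/κ := by positivity

lemma kfact2 : 4/κ < 1 := (div_lt_one (by linarith)).mpr (by linarith)

lemma kfact3 : 1/2 < 4/κ := (lt_div_iff₀ (by linarith)).mpr (by linarith)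

lemma kfact4 : 1 < 8/κ := (lt_div_iff₀ (by linarith)).mpr (by linarith)

lemma kfact5 : 8/κ < 2 := (div_lt_iff₀ (by linarith)).mpr (by linarith)

lemma SLEphi1_int : IntegrableOn (SLEphi1 κ) (Set.Ioi 1) volume := by
  have := kfact2 h1 h2
  have := kfact1 h1 h2
  exact integrableOn_model (by linarith) (by linarith)

lemma SLEphi2_int : IntegrableOn (SLEphi2 κ) (Set.Ioi 1) volume := by
  have := kfact2 h1 h2
  have := kfact1 h1 h2
  exact integrableOn_model (by linarith) (by linarith)

lemma SLEhbar_int : IntegrableOn (SLEhbar κ) (Set.Ioi 1) volume := by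
  have := kfact3 h1 h2
  have := kfact2 h1 h2
  exact integrableOn_model (by linarith) (by linarith)

omit h1 h2 in
lemma SLEphi1_pos (hv : 1 < v) : 0 < SLEphi1 κ v := by
  unfold SLEphi1
  have hv0 : (0:ℝ) < v := by linarith
  have hv1 : (0:ℝ) < v - 2⁻¹ := by linarith
  have hv2 : (0:ℝ) < v - 1 := by linarith
  positivity

omit h1 h2 in
lemma SLEphi2_pos (hv : 1 < v) : 0 < SLEphi2 κ v := by
  unfold SLEphi2
  have hv0 : (0:ℝ) < v := by linarith
  have hv1 : (0:ℝ) < v - 2⁻¹ := by linarith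
  have hv2 : (0:ℝ) < v - 1 := by linarith
  positivity

omit h1 h2 in
lemma SLEgg_pos (hb0 : 0 ≤ b) (hb1 : b ≤ 1) (hs0 : 0 ≤ s) (hs : s ≤ 2⁻¹)
    (hv₂ : 1 < v₂) (hv₁ : v₂ < v₁) : 0 < SLEgg κ b s v₂ v₁ := by
  unfold SLEgg
  have hbs : b * s ≤ 2⁻¹ := le_trans (mul_le_of_le_one_left hs0 hb1) hs
  have c1 : (0:ℝ) < v₁ := by linarith
  have c2 : (0:ℝ) < v₁ - s := by linarith
  have c3 : (0:ℝ) < v₁ - 1 := by linarith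
  have c4 : (0:ℝ) < v₂ := by linarith
  have c5 : (0:ℝ) < v₂ - s := by linarith
  have c6 : (0:ℝ) < v₂ - 1 := by linarith
  have c7 : (0:ℝ) < v₁ - v₂ := by linarith
  have c8 : (0:ℝ) < v₁ - b * s := by linarith
  have c9 : (0:ℝ) < v₂ - b * s := by linarith
  positivity

set_option maxHeartbeats 2000000 in
lemma SLEgg_le (hb0 : 0 ≤ b) (hb1 : b ≤ 1) (hs0 : 0 ≤ s) (hs : s ≤ 2⁻¹)
    (hv₂ : 1 < v₂) (hv₁ : v₂ < v₁) :
    SLEgg κ b s v₂ v₁ ≤ SLEphi2 κ v₂ * SLEphi1 κ v₁ := by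
  have hp0 := kfact1 h1 h2
  have hp1 := kfact2 h1 h2
  have hq1 := kfact4 h1 h2
  have hq2 := kfact5 h1 h2
  have hbs : b * s ≤ 2⁻¹ := le_trans (mul_le_of_le_one_left hs0 hb1) hs
  have hbs0 : 0 ≤ b * s := mul_nonneg hb0 hs0
  have c1 : (0:ℝ) < v₁ := by linarith
  have c3 : (0:ℝ) < v₁ - 1 := by linarith
  have c4 : (0:ℝ) < v₂ := by linarith
  have c6 : (0:ℝ) < v₂ - 1 := by linarith
  have c10 : (0:ℝ) < v₁ - 2⁻¹ := by linarith
  have c11 : (0:ℝ) < v₂ - 2⁻¹ := by linarith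
  have hA2 : (v₁ - s) ^ (-(4/κ)) ≤ (v₁ - 2⁻¹) ^ (-(4/κ)) :=
    Real.rpow_le_rpow_of_nonpos c10 (by linarith) (by linarith)
  have hB2 : (v₂ - s) ^ (-(4/κ)) ≤ (v₂ - 2⁻¹) ^ (-(4/κ)) :=
    Real.rpow_le_rpow_of_nonpos c11 (by linarith) (by linarith)
  have hC : (v₁ - v₂) ^ (8/κ) ≤ v₁ ^ (8/κ) :=
    Real.rpow_le_rpow (by linarith) (by linarith) (by linarith)
  have hD1 : (v₁ - b * s) ^ (8/κ - 2) ≤ (v₁ - 2⁻¹) ^ (8/κ - 2) :=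
    Real.rpow_le_rpow_of_nonpos c10 (by linarith) (by linarith)
  have hD2 : (v₂ - b * s) ^ (8/κ - 2) ≤ (v₂ - 2⁻¹) ^ (8/κ - 2) :=
    Real.rpow_le_rpow_of_nonpos c11 (by linarith) (by linarith)
  have step : SLEgg κ b s v₂ v₁ ≤
      v₁ ^ (-(4/κ)) * (v₁ - 2⁻¹) ^ (-(4/κ)) * (v₁ - 1) ^ (-(4/κ))
        * (v₂ ^ (-(4/κ)) * (v₂ - 2⁻¹) ^ (-(4/κ)) * (v₂ - 1) ^ (-(4/κ)))
        * v₁ ^ (8/κ) * (v₁ - 2⁻¹) ^ (8/κ - 2) * (v₂ - 2⁻¹) ^ (8/κ - 2) := by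
    unfold SLEgg
    refine mul_le_mul (mul_le_mul (mul_le_mul (mul_le_mul (mul_le_mul
      (mul_le_mul le_rfl hA2 ?_ ?_) le_rfl ?_ ?_)
      (mul_le_mul (mul_le_mul le_rfl hB2 ?_ ?_) le_rfl ?_ ?_) ?_ ?_)
      hC ?_ ?_) hD1 ?_ ?_) hD2 ?_ ?_ <;>
    · repeat' apply mul_nonneg
      all_goals exact Real.rpow_nonneg (by linarith) _
  refine le_trans step (le_of_eq ?_)
  unfold SLEphi1 SLEphi2
  have e1 : v₁ ^ (-(4/κ)) * v₁ ^ (8/κ) = v₁ ^ (4/κ) := by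
    rw [← Real.rpow_add c1]; congr 1; ring
  have e2 : (v₁ - 2⁻¹) ^ (-(4/κ)) * (v₁ - 2⁻¹) ^ (8/κ - 2) = (v₁ - 2⁻¹) ^ (4/κ - 2) := by
    rw [← Real.rpow_add c10]; congr 1; ring
  have e3 : (v₂ - 2⁻¹) ^ (-(4/κ)) * (v₂ - 2⁻¹) ^ (8/κ - 2) = (v₂ - 2⁻¹) ^ (4/κ - 2) := by
    rw [← Real.rpow_add c11]; congr 1; ring
  rw [← e1, ← e2, ← e3]; ring

omit h1 h2 in
lemma SLEhh_nonneg (hs : s ≤ v) (hv : 1 < v) : 0 ≤ SLEhh κ s v := by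
  unfold SLEhh
  have : (0:ℝ) < v := by linarith
  exact mul_nonneg (mul_nonneg (Real.rpow_nonneg (by linarith) _)
    (Real.rpow_nonneg (by linarith) _)) (Real.rpow_nonneg (by linarith) _)

lemma SLEhh_le (hs0 : 0 ≤ s) (hs : s ≤ 2⁻¹) (hv : 1 < v) :
    SLEhh κ s v ≤ SLEhbar κ v := by
  have hp0 := kfact1 h1 h2
  unfold SLEhh SLEhbar
  have c0 : (0:ℝ) < v := by linarith
  have c10 : (0:ℝ) < v - 2⁻¹ := by linarith
  have hA : (v - s) ^ (-(4/κ)) ≤ (v - 2⁻¹) ^ (-(4/κ)) :=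
    Real.rpow_le_rpow_of_nonpos c10 (by linarith) (by linarith)
  have h3 : (0:ℝ) ≤ (v - 1) ^ (-(4/κ)) := Real.rpow_nonneg (by linarith) _
  have h1' : (0:ℝ) ≤ v ^ (-(4/κ)) := Real.rpow_nonneg (by linarith) _
  exact mul_le_mul (mul_le_mul le_rfl hA (Real.rpow_nonneg (by linarith) _) h1') le_rfl h3
    (mul_nonneg h1' (Real.rpow_nonneg (by linarith) _))

end facts

section conv
open Filter
variable {κ b s v v₁ v₂ : ℝ}

lemma SLEgg_meas1 (κ b s v₂ : ℝ) : Measurable (SLEgg κ b s v₂) := by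
  unfold SLEgg; fun_prop

lemma SLEhh_meas (κ s : ℝ) : Measurable (SLEhh κ s) := by
  unfold SLEhh; fun_prop

lemma SLEgg_tendsto (hv₂ : 1 < v₂) (hv₁ : v₂ < v₁) :
    Tendsto (fun s => SLEgg κ b s v₂ v₁) (nhdsWithin 0 (Set.Ioi 0))
      (nhds (SLEgg κ b 0 v₂ v₁)) := by
  have hc : ∀ w e : ℝ, 1 < w → ContinuousAt (fun s : ℝ => (w - s) ^ e) 0 := by
    intro w e hw
    apply ContinuousAt.rpow_const (continuousAt_const.sub continuousAt_id)
    left; simp only [Pi.sub_apply, id_eq, sub_zero]; intro h; linarith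
  have hc' : ∀ w e : ℝ, 1 < w → ContinuousAt (fun s : ℝ => (w - b * s) ^ e) 0 := by
    intro w e hw
    apply ContinuousAt.rpow_const (continuousAt_const.sub (continuousAt_const.mul continuousAt_id))
    left; simp only [Pi.sub_apply, Pi.mul_apply, id_eq, mul_zero, sub_zero]; intro h; linarith
  have hct : ContinuousAt (fun s => SLEgg κ b s v₂ v₁) 0 := by
    unfold SLEgg
    exact ((((((continuousAt_const.mul (hc v₁ _ (by linarith))).mul continuousAt_const).mul
      ((continuousAt_const.mul (hc v₂ _ hv₂)).mul continuousAt_const)).mul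
      continuousAt_const).mul (hc' v₁ _ (by linarith))).mul (hc' v₂ _ hv₂))
  exact hct.tendsto.mono_left nhdsWithin_le_nhds

lemma SLEhh_tendsto (hv : 1 < v) :
    Tendsto (fun s => SLEhh κ s v) (nhdsWithin 0 (Set.Ioi 0)) (nhds (SLEhh κ 0 v)) := by
  have hc : ContinuousAt (fun s : ℝ => (v - s) ^ (-(4/κ))) 0 := by
    apply ContinuousAt.rpow_const (continuousAt_const.sub continuousAt_id)
    left; simp only [Pi.sub_apply, id_eq, sub_zero]; intro h; linarith
  have hct : ContinuousAt (fun s => SLEhh κ s v) 0 := by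
    unfold SLEhh
    exact (continuousAt_const.mul hc).mul continuousAt_const
  exact hct.tendsto.mono_left nhdsWithin_le_nhds

variable (h1 : 4 < κ) (h2 : κ < 8) (hb0 : 0 ≤ b) (hb1 : b ≤ 1)
include h1 h2

lemma SLEH_tendsto :
    Tendsto (fun s => ∫ v in Set.Ioi (1:ℝ), SLEhh κ s v) (nhdsWithin 0 (Set.Ioi 0))
      (nhds (∫ v in Set.Ioi (1:ℝ), SLEhh κ 0 v)) := by
  refine tendsto_integral_filter_of_dominated_convergence (SLEhbar κ) ?_ ?_ ?_ ?_
  · exact Filter.Eventually.of_forall fun s => (SLEhh_meas κ s).aestronglyMeasurable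
  · filter_upwards [Ioc_mem_nhdsGT_of_mem (Set.left_mem_Ico.mpr (by norm_num : (0:ℝ) < 2⁻¹))]
      with s hs
    rw [ae_restrict_iff' measurableSet_Ioi]
    refine Filter.Eventually.of_forall fun v hv => ?_
    have hv1 : (1:ℝ) < v := hv
    rw [Real.norm_eq_abs, abs_of_nonneg (SLEhh_nonneg (by linarith [hs.2]) hv1)]
    exact SLEhh_le h1 h2 hs.1.le hs.2 hv1
  · exact SLEhbar_int h1 h2
  · rw [ae_restrict_iff' measurableSet_Ioi]
    exact Filter.Eventually.of_forall fun v hv => SLEhh_tendsto hv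

include hb0 hb1

lemma SLEgg_integrableOn (hs0 : 0 ≤ s) (hs : s ≤ 2⁻¹) (hv₂ : 1 < v₂) :
    IntegrableOn (SLEgg κ b s v₂) (Set.Ioi v₂) volume := by
  refine Integrable.mono (((SLEphi1_int h1 h2).mono_set
    (Set.Ioi_subset_Ioi hv₂.le)).const_mul (SLEphi2 κ v₂))
    (SLEgg_meas1 κ b s v₂).aestronglyMeasurable ?_
  rw [ae_restrict_iff' measurableSet_Ioi]
  refine Filter.Eventually.of_forall fun v₁ hv₁ => ?_
  have hv₁' : v₂ < v₁ := hv₁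
  rw [Real.norm_eq_abs, Real.norm_eq_abs,
    abs_of_nonneg (SLEgg_pos hb0 hb1 hs0 hs hv₂ hv₁').le,
    abs_of_nonneg (mul_nonneg (SLEphi2_pos hv₂).le (SLEphi1_pos (by linarith)).le)]
  exact SLEgg_le h1 h2 hb0 hb1 hs0 hs hv₂ hv₁'

lemma SLEinner_tendsto (hv₂ : 1 < v₂) :
    Tendsto (fun s => ∫ v₁ in Set.Ioi v₂, SLEgg κ b s v₂ v₁) (nhdsWithin 0 (Set.Ioi 0))
      (nhds (∫ v₁ in Set.Ioi v₂, SLEgg κ b 0 v₂ v₁)) := by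
  refine tendsto_integral_filter_of_dominated_convergence
    (fun v₁ => SLEphi2 κ v₂ * SLEphi1 κ v₁) ?_ ?_ ?_ ?_
  · exact Filter.Eventually.of_forall fun s => (SLEgg_meas1 κ b s v₂).aestronglyMeasurable
  · filter_upwards [Ioc_mem_nhdsGT_of_mem (Set.left_mem_Ico.mpr (by norm_num : (0:ℝ) < 2⁻¹))]
      with s hs
    rw [ae_restrict_iff' measurableSet_Ioi]
    refine Filter.Eventually.of_forall fun v₁ hv₁ => ?_
    have hv₁' : v₂ < v₁ := hv₁
    rw [Real.norm_eq_abs, abs_of_nonneg (SLEgg_pos hb0 hb1 hs.1.le hs.2 hv₂ hv₁').le]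
    exact SLEgg_le h1 h2 hb0 hb1 hs.1.le hs.2 hv₂ hv₁'
  · exact ((SLEphi1_int h1 h2).mono_set (Set.Ioi_subset_Ioi hv₂.le)).const_mul _
  · rw [ae_restrict_iff' measurableSet_Ioi]
    exact Filter.Eventually.of_forall fun v₁ hv₁ => SLEgg_tendsto hv₂ hv₁

lemma SLEinner_bound (hs0 : 0 ≤ s) (hs : s ≤ 2⁻¹) (hv₂ : 1 < v₂) :
    ‖∫ v₁ in Set.Ioi v₂, SLEgg κ b s v₂ v₁‖
      ≤ SLEphi2 κ v₂ * ∫ v in Set.Ioi (1:ℝ), SLEphi1 κ v := by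
  calc ‖∫ v₁ in Set.Ioi v₂, SLEgg κ b s v₂ v₁‖
      ≤ ∫ v₁ in Set.Ioi v₂, ‖SLEgg κ b s v₂ v₁‖ := norm_integral_le_integral_norm _
    _ ≤ ∫ v₁ in Set.Ioi v₂, SLEphi2 κ v₂ * SLEphi1 κ v₁ := by
        refine integral_mono_of_nonneg (Filter.Eventually.of_forall fun v₁ => norm_nonneg _)
          (((SLEphi1_int h1 h2).mono_set (Set.Ioi_subset_Ioi hv₂.le)).const_mul _) ?_
        refine (ae_restrict_iff' measurableSet_Ioi).mpr
          (Filter.Eventually.of_forall fun v₁ hv₁ => ?_)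
        have hv₁' : v₂ < v₁ := hv₁
        show ‖SLEgg κ b s v₂ v₁‖ ≤ SLEphi2 κ v₂ * SLEphi1 κ v₁
        rw [Real.norm_eq_abs, abs_of_nonneg (SLEgg_pos hb0 hb1 hs0 hs hv₂ hv₁').le]
        exact SLEgg_le h1 h2 hb0 hb1 hs0 hs hv₂ hv₁'
    _ = SLEphi2 κ v₂ * ∫ v₁ in Set.Ioi v₂, SLEphi1 κ v₁ := integral_const_mul _ _
    _ ≤ SLEphi2 κ v₂ * ∫ v in Set.Ioi (1:ℝ), SLEphi1 κ v := by
        refine mul_le_mul_of_nonneg_left ?_ (SLEphi2_pos hv₂).le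
        refine setIntegral_mono_set (SLEphi1_int h1 h2) ?_
          (HasSubset.Subset.eventuallyLE (Set.Ioi_subset_Ioi hv₂.le))
        refine (ae_restrict_iff' measurableSet_Ioi).mpr
          (Filter.Eventually.of_forall fun v hv => (SLEphi1_pos hv).le)

omit h1 h2 hb0 hb1 in
lemma SLEinner_meas (κ b s : ℝ) :
    AEStronglyMeasurable (fun v₂ => ∫ v₁ in Set.Ioi v₂, SLEgg κ b s v₂ v₁)
      (volume.restrict (Set.Ioi 1)) := by
  have heq : (fun v₂ => ∫ v₁ in Set.Ioi v₂, SLEgg κ b s v₂ v₁)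
      = fun v₂ => ∫ v₁, Set.indicator (Set.Ioi v₂) (SLEgg κ b s v₂) v₁ :=
    funext fun v₂ => (integral_indicator measurableSet_Ioi).symm
  rw [heq]
  have m : StronglyMeasurable
      (Function.uncurry (fun v₂ v₁ => Set.indicator (Set.Ioi v₂) (SLEgg κ b s v₂) v₁)) := by
    have huc : Function.uncurry (fun v₂ v₁ => Set.indicator (Set.Ioi v₂) (SLEgg κ b s v₂) v₁)
        = Set.indicator {p : ℝ × ℝ | p.1 < p.2} (fun p => SLEgg κ b s p.1 p.2) := by
      funext p
      rcases p with ⟨v₂, v₁⟩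
      simp only [Function.uncurry, Set.indicator_apply, Set.mem_Ioi, Set.mem_setOf_eq]
    rw [huc]
    refine (Measurable.indicator ?_ (measurableSet_lt measurable_fst measurable_snd)).stronglyMeasurable
    unfold SLEgg; fun_prop
  exact m.integral_prod_right.aestronglyMeasurable.restrict

lemma SLEdouble_tendsto :
    Tendsto (fun s => ∫ v₂ in Set.Ioi (1:ℝ), ∫ v₁ in Set.Ioi v₂, SLEgg κ b s v₂ v₁)
      (nhdsWithin 0 (Set.Ioi 0))
      (nhds (∫ v₂ in Set.Ioi (1:ℝ), ∫ v₁ in Set.Ioi v₂, SLEgg κ b 0 v₂ v₁)) := by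
  refine tendsto_integral_filter_of_dominated_convergence
    (fun v₂ => SLEphi2 κ v₂ * ∫ v in Set.Ioi (1:ℝ), SLEphi1 κ v) ?_ ?_ ?_ ?_
  · exact Filter.Eventually.of_forall fun s => SLEinner_meas κ b s
  · filter_upwards [Ioc_mem_nhdsGT_of_mem (Set.left_mem_Ico.mpr (by norm_num : (0:ℝ) < 2⁻¹))]
      with s hs
    rw [ae_restrict_iff' measurableSet_Ioi]
    exact Filter.Eventually.of_forall fun v₂ hv₂ =>
      SLEinner_bound h1 h2 hb0 hb1 hs.1.le hs.2 hv₂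
  · exact (SLEphi2_int h1 h2).mul_const _
  · rw [ae_restrict_iff' measurableSet_Ioi]
    exact Filter.Eventually.of_forall fun v₂ hv₂ => SLEinner_tendsto h1 h2 hb0 hb1 hv₂

lemma SLEinner0_int :
    IntegrableOn (fun v₂ => ∫ v₁ in Set.Ioi v₂, SLEgg κ b 0 v₂ v₁) (Set.Ioi 1) volume := by
  refine Integrable.mono (((SLEphi2_int h1 h2).mul_const
    (∫ v in Set.Ioi (1:ℝ), SLEphi1 κ v))) (SLEinner_meas κ b 0) ?_
  rw [ae_restrict_iff' measurableSet_Ioi]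
  refine Filter.Eventually.of_forall fun v₂ hv₂ => ?_
  have hv₂' : (1:ℝ) < v₂ := hv₂
  refine le_trans (SLEinner_bound h1 h2 hb0 hb1 le_rfl (by norm_num) hv₂') ?_
  exact le_abs_self _

lemma SLEI0_pos : 0 < ∫ v₂ in Set.Ioi (1:ℝ), ∫ v₁ in Set.Ioi v₂, SLEgg κ b 0 v₂ v₁ := by
  have inner_pos : ∀ v₂ : ℝ, 1 < v₂ → 0 < ∫ v₁ in Set.Ioi v₂, SLEgg κ b 0 v₂ v₁ := by
    intro v₂ hv₂
    refine (setIntegral_pos_iff_support_of_nonneg_ae ?_ ?_).mpr ?_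
    · refine (ae_restrict_iff' measurableSet_Ioi).mpr
        (Filter.Eventually.of_forall fun v₁ hv₁ =>
          (SLEgg_pos hb0 hb1 le_rfl (by norm_num) hv₂ hv₁).le)
    · exact SLEgg_integrableOn h1 h2 hb0 hb1 le_rfl (by norm_num) hv₂
    · refine lt_of_lt_of_le ?_ (measure_mono (fun v₁ hv₁ =>
        ⟨(SLEgg_pos hb0 hb1 le_rfl (by norm_num) hv₂ hv₁).ne', hv₁⟩ :
          Set.Ioi v₂ ⊆ Function.support (SLEgg κ b 0 v₂) ∩ Set.Ioi v₂))
      rw [Real.volume_Ioi]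
      norm_num
  refine (setIntegral_pos_iff_support_of_nonneg_ae ?_ ?_).mpr ?_
  · refine (ae_restrict_iff' measurableSet_Ioi).mpr
      (Filter.Eventually.of_forall fun v₂ hv₂ => (inner_pos v₂ hv₂).le)
  · exact SLEinner0_int h1 h2 hb0 hb1
  · refine lt_of_lt_of_le ?_ (measure_mono (fun v₂ hv₂ =>
      ⟨(inner_pos v₂ hv₂).ne', hv₂⟩ :
        Set.Ioi 1 ⊆ Function.support (fun v₂ => ∫ v₁ in Set.Ioi v₂, SLEgg κ b 0 v₂ v₁)
          ∩ Set.Ioi 1))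
    rw [Real.volume_Ioi]
    norm_num

end conv

section final
open Filter
variable {κ b v v₁ v₂ : ℝ}

lemma SLEgg_zero_eq (hv₂ : 1 < v₂) (hv₁ : v₂ < v₁) :
    SLEgg κ b 0 v₂ v₁ = (v₁ - 1) ^ (-(4/κ)) * (v₂ - 1) ^ (-(4/κ)) * (v₁ - v₂) ^ (8/κ)
      * v₁ ^ (-2 : ℝ) * v₂ ^ (-2 : ℝ) := by
  unfold SLEgg
  have c1 : (0:ℝ) < v₁ := by linarith
  have c4 : (0:ℝ) < v₂ := by linarith
  have e1 : v₁ ^ (-(4/κ)) * v₁ ^ (-(4/κ)) * v₁ ^ (8/κ - 2) = v₁ ^ (-2:ℝ) := by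
    rw [← Real.rpow_add c1, ← Real.rpow_add c1]; congr 1; ring
  have e2 : v₂ ^ (-(4/κ)) * v₂ ^ (-(4/κ)) * v₂ ^ (8/κ - 2) = v₂ ^ (-2:ℝ) := by
    rw [← Real.rpow_add c4, ← Real.rpow_add c4]; congr 1; ring
  rw [mul_zero]
  simp only [sub_zero]
  rw [← e1, ← e2]
  ring

lemma SLEI0_eq :
    (∫ v₂ in Set.Ioi (1:ℝ), ∫ v₁ in Set.Ioi v₂, SLEgg κ b 0 v₂ v₁)
      = ∫ v₂ in Set.Ioi (1:ℝ), ∫ v₁ in Set.Ioi v₂,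
          ((v₁ - 1) ^ (-(4/κ)) * (v₂ - 1) ^ (-(4/κ)) * (v₁ - v₂) ^ (8/κ)
            * v₁ ^ (-2 : ℝ) * v₂ ^ (-2 : ℝ)) := by
  refine setIntegral_congr_fun measurableSet_Ioi fun v₂ hv₂ => ?_
  exact setIntegral_congr_fun measurableSet_Ioi fun v₁ hv₁ => SLEgg_zero_eq hv₂ hv₁

lemma SLEH0_eq (h1 : 4 < κ) (h2 : κ < 8) :
    (∫ v in Set.Ioi (1:ℝ), SLEhh κ 0 v)
      = Real.Gamma (1 - 4/κ) * Real.Gamma (12/κ - 1)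
          / Real.Gamma ((1 - 4/κ) + (12/κ - 1)) := by
  have hp0 := kfact1 h1 h2
  have hp1 := kfact2 h1 h2
  have heq : ∀ v ∈ Set.Ioi (1:ℝ), SLEhh κ 0 v
      = v ^ (-(8/κ)) * (v - 1) ^ ((1 - 4/κ) - 1) := by
    intro v hv
    have hv0 : (0:ℝ) < v := lt_trans one_pos hv
    unfold SLEhh
    rw [sub_zero, show ((1 - 4/κ) - 1 : ℝ) = -(4/κ) by ring, ← Real.rpow_add hv0]
    congr 2
    ring
  rw [setIntegral_congr_fun measurableSet_Ioi heq,
    beta_Ioi (by linarith : (0:ℝ) < 1 - 4/κ)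
      (by
        have h12 : (1:ℝ) < 12/κ := (one_lt_div (by linarith)).mpr (by linarith)
        have h12' : (12:ℝ)/κ = 4/κ + 8/κ := by ring
        linarith : 1 - 4/κ < 8/κ),
    show (8/κ - (1 - 4/κ) : ℝ) = 12/κ - 1 by ring,
    show ((1 - 4/κ) + (12/κ - 1) : ℝ) = 8/κ by ring]
  ring

end final

lemma SLEalg {S q1 q2 d A B P3 G C H : ℝ} (hd : d ≠ 0) (hS : S * (q1 * q2) = 1) :
    S * ((d * ((A * q1) * (B * q2) * P3)) * G) / (C * (d * H))
      = (A * B) * (P3 * (G / (C * H))) := by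
  have h3 : d * d⁻¹ = 1 := mul_inv_cancel₀ hd
  rw [div_eq_mul_inv, div_eq_mul_inv, mul_inv C (d * H), mul_inv d H, mul_inv C H]
  calc S * ((d * ((A * q1) * (B * q2) * P3)) * G) * (C⁻¹ * (d⁻¹ * H⁻¹))
      = (S * (q1 * q2)) * (d * d⁻¹) * ((A * B) * (P3 * (G * (C⁻¹ * H⁻¹)))) := by ring
    _ = (A * B) * (P3 * (G * (C⁻¹ * H⁻¹))) := by rw [hS, h3, one_mul, one_mul]

set_option maxHeartbeats 4000000 in
theorem stmt_9 (κ : ℝ) (h1 : 4 < κ) (h2 : κ < 8) :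
    ∃ C : ℝ, 0 < C ∧
      C = (∫ v₂ in Set.Ioi (1:ℝ), ∫ v₁ in Set.Ioi v₂,
            (v₁ - 1) ^ (-(4/κ)) * (v₂ - 1) ^ (-(4/κ)) * (v₁ - v₂) ^ (8/κ)
              * v₁ ^ (-2 : ℝ) * v₂ ^ (-2 : ℝ))
          / ((Real.Gamma (1 - 4/κ) * Real.Gamma (8/κ - 1)
                / Real.Gamma ((1 - 4/κ) + (8/κ - 1)))
            * (Real.Gamma (1 - 4/κ) * Real.Gamma (12/κ - 1)
                / Real.Gamma ((1 - 4/κ) + (12/κ - 1)))) ∧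
      ∀ b ∈ Set.Ioo (0:ℝ) 1,
        Filter.Tendsto
          (fun s : ℝ => s ^ (8/κ - 2) *
            (∫ v₂ in Set.Ioi (1:ℝ), ∫ v₁ in Set.Ioi v₂,
              (s ^ (2/κ) * (1 - s) ^ (2/κ)
                * (v₁ ^ (-(4/κ)) * (v₁ - s) ^ (-(4/κ)) * (v₁ - 1) ^ (-(4/κ)))
                * (v₂ ^ (-(4/κ)) * (v₂ - s) ^ (-(4/κ)) * (v₂ - 1) ^ (-(4/κ)))
                * (v₁ - v₂) ^ (8/κ))
              * ((b * s) ^ (1 - 4/κ) * ((1 - b) * s) ^ (1 - 4/κ) * (1 - b * s) ^ (1 - 4/κ)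
                * (v₁ - b * s) ^ (8/κ - 2) * (v₂ - b * s) ^ (8/κ - 2)))
            / ((Real.Gamma (1 - 4/κ) * Real.Gamma (8/κ - 1)
                  / Real.Gamma ((1 - 4/κ) + (8/κ - 1)))
              * ∫ v in Set.Ioi (1:ℝ),
                  s ^ (2/κ) * (1 - s) ^ (2/κ) * v ^ (-(4/κ)) * (v - s) ^ (-(4/κ))
                    * (v - 1) ^ (-(4/κ))))
          (nhdsWithin 0 (Set.Ioi 0))
          (nhds (C * (b ^ (1 - 4/κ) * (1 - b) ^ (1 - 4/κ)))) := by
  have hp0 := kfact1 h1 h2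
  have hp1 := kfact2 h1 h2
  have hq1 := kfact4 h1 h2
  have hq2 := kfact5 h1 h2
  have h8 : (8:ℝ)/κ = 4/κ + 4/κ := by ring
  have h12 : (12:ℝ)/κ = 4/κ + 8/κ := by ring
  have hG1 : 0 < Real.Gamma (1 - 4/κ) := Real.Gamma_pos_of_pos (by linarith)
  have hG2 : 0 < Real.Gamma (8/κ - 1) := Real.Gamma_pos_of_pos (by linarith)
  have hG3 : 0 < Real.Gamma ((1 - 4/κ) + (8/κ - 1)) := Real.Gamma_pos_of_pos (by linarith)
  have hG4 : 0 < Real.Gamma (12/κ - 1) := Real.Gamma_pos_of_pos (by linarith)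
  have hG5 : 0 < Real.Gamma ((1 - 4/κ) + (12/κ - 1)) := Real.Gamma_pos_of_pos (by linarith)
  set Cκ := Real.Gamma (1 - 4/κ) * Real.Gamma (8/κ - 1)
    / Real.Gamma ((1 - 4/κ) + (8/κ - 1)) with hCκdef
  set B2 := Real.Gamma (1 - 4/κ) * Real.Gamma (12/κ - 1)
    / Real.Gamma ((1 - 4/κ) + (12/κ - 1)) with hB2def
  set I0 := (∫ v₂ in Set.Ioi (1:ℝ), ∫ v₁ in Set.Ioi v₂,
      (v₁ - 1) ^ (-(4/κ)) * (v₂ - 1) ^ (-(4/κ)) * (v₁ - v₂) ^ (8/κ)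
        * v₁ ^ (-2 : ℝ) * v₂ ^ (-2 : ℝ)) with hI0def
  have hCκpos : 0 < Cκ := by rw [hCκdef]; exact div_pos (mul_pos hG1 hG2) hG3
  have hB2pos : 0 < B2 := by rw [hB2def]; exact div_pos (mul_pos hG1 hG4) hG5
  have hI0pos : 0 < I0 := by
    rw [hI0def, ← SLEI0_eq (b := 2⁻¹)]
    exact SLEI0_pos h1 h2 (by norm_num) (by norm_num)
  refine ⟨I0 / (Cκ * B2), div_pos hI0pos (mul_pos hCκpos hB2pos), rfl, ?_⟩
  intro b hb
  obtain ⟨hb0, hb1⟩ := hb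
  have hH0 : (∫ v in Set.Ioi (1:ℝ), SLEhh κ 0 v) = B2 := by
    rw [SLEH0_eq h1 h2, hB2def]
  have t1 : Filter.Tendsto (fun s : ℝ => (1 - b * s) ^ (1 - 4/κ))
      (nhdsWithin 0 (Set.Ioi 0)) (nhds 1) := by
    have hct : ContinuousAt (fun s : ℝ => (1 - b * s) ^ (1 - 4/κ)) 0 := by
      apply ContinuousAt.rpow_const
        (continuousAt_const.sub (continuousAt_const.mul continuousAt_id))
      left; simp
    have h := hct.tendsto.mono_left (nhdsWithin_le_nhds (s := Set.Ioi (0:ℝ)))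
    simpa using h
  have t2 : Filter.Tendsto
      (fun s => (∫ v₂ in Set.Ioi (1:ℝ), ∫ v₁ in Set.Ioi v₂, SLEgg κ b s v₂ v₁)
        / (Cκ * ∫ v in Set.Ioi (1:ℝ), SLEhh κ s v))
      (nhdsWithin 0 (Set.Ioi 0)) (nhds (I0 / (Cκ * B2))) := by
    have hnum := SLEdouble_tendsto h1 h2 hb0.le hb1.le
    have hden := (SLEH_tendsto h1 h2).const_mul Cκ
    have hne : Cκ * (∫ v in Set.Ioi (1:ℝ), SLEhh κ 0 v) ≠ 0 := by
      rw [hH0]; exact (mul_pos hCκpos hB2pos).ne'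
    have hdiv := hnum.div hden hne
    rw [SLEI0_eq, ← hI0def, hH0] at hdiv
    exact hdiv
  have hmain := (t1.mul t2).const_mul (b ^ (1 - 4/κ) * (1 - b) ^ (1 - 4/κ))
  rw [show (b ^ (1 - 4/κ) * (1 - b) ^ (1 - 4/κ)) * (1 * (I0 / (Cκ * B2)))
      = I0 / (Cκ * B2) * (b ^ (1 - 4/κ) * (1 - b) ^ (1 - 4/κ)) by ring] at hmain
  refine Filter.Tendsto.congr' ?_ hmain
  filter_upwards [Ioo_mem_nhdsGT_of_mem
    (Set.left_mem_Ico.mpr (by norm_num : (0:ℝ) < 2⁻¹))] with s hs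
  obtain ⟨hsp, hs2⟩ := hs
  have h1s : (0:ℝ) < 1 - s := by
    have : (2⁻¹:ℝ) < 1 := by norm_num
    linarith
  have hinner : ∀ v₂ : ℝ,
      (∫ v₁ in Set.Ioi v₂,
        (s ^ (2/κ) * (1 - s) ^ (2/κ)
          * (v₁ ^ (-(4/κ)) * (v₁ - s) ^ (-(4/κ)) * (v₁ - 1) ^ (-(4/κ)))
          * (v₂ ^ (-(4/κ)) * (v₂ - s) ^ (-(4/κ)) * (v₂ - 1) ^ (-(4/κ)))
          * (v₁ - v₂) ^ (8/κ))
        * ((b * s) ^ (1 - 4/κ) * ((1 - b) * s) ^ (1 - 4/κ) * (1 - b * s) ^ (1 - 4/κ)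
          * (v₁ - b * s) ^ (8/κ - 2) * (v₂ - b * s) ^ (8/κ - 2)))
      = (s ^ (2/κ) * (1 - s) ^ (2/κ)
          * ((b * s) ^ (1 - 4/κ) * ((1 - b) * s) ^ (1 - 4/κ) * (1 - b * s) ^ (1 - 4/κ)))
        * ∫ v₁ in Set.Ioi v₂, SLEgg κ b s v₂ v₁ := by
    intro v₂
    rw [← integral_const_mul]
    congr 1
    funext v₁
    unfold SLEgg
    ring
  have hN : (∫ v₂ in Set.Ioi (1:ℝ), ∫ v₁ in Set.Ioi v₂,
      (s ^ (2/κ) * (1 - s) ^ (2/κ)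
        * (v₁ ^ (-(4/κ)) * (v₁ - s) ^ (-(4/κ)) * (v₁ - 1) ^ (-(4/κ)))
        * (v₂ ^ (-(4/κ)) * (v₂ - s) ^ (-(4/κ)) * (v₂ - 1) ^ (-(4/κ)))
        * (v₁ - v₂) ^ (8/κ))
      * ((b * s) ^ (1 - 4/κ) * ((1 - b) * s) ^ (1 - 4/κ) * (1 - b * s) ^ (1 - 4/κ)
        * (v₁ - b * s) ^ (8/κ - 2) * (v₂ - b * s) ^ (8/κ - 2)))
      = (s ^ (2/κ) * (1 - s) ^ (2/κ)
          * ((b * s) ^ (1 - 4/κ) * ((1 - b) * s) ^ (1 - 4/κ) * (1 - b * s) ^ (1 - 4/κ)))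
        * ∫ v₂ in Set.Ioi (1:ℝ), ∫ v₁ in Set.Ioi v₂, SLEgg κ b s v₂ v₁ := by
    simp_rw [hinner]
    exact integral_const_mul _ _
  have hD : (∫ v in Set.Ioi (1:ℝ),
      s ^ (2/κ) * (1 - s) ^ (2/κ) * v ^ (-(4/κ)) * (v - s) ^ (-(4/κ)) * (v - 1) ^ (-(4/κ)))
      = (s ^ (2/κ) * (1 - s) ^ (2/κ)) * ∫ v in Set.Ioi (1:ℝ), SLEhh κ s v := by
    rw [← integral_const_mul]
    congr 1
    funext v
    unfold SLEhh
    ring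
  have e1 : (b * s) ^ (1 - 4/κ) = b ^ (1 - 4/κ) * s ^ (1 - 4/κ) :=
    Real.mul_rpow hb0.le hsp.le
  have e2 : ((1 - b) * s) ^ (1 - 4/κ) = (1 - b) ^ (1 - 4/κ) * s ^ (1 - 4/κ) :=
    Real.mul_rpow (by linarith) hsp.le
  have e3 : s ^ (8/κ - 2) * (s ^ (1 - 4/κ) * s ^ (1 - 4/κ)) = 1 := by
    rw [← Real.rpow_add hsp, ← Real.rpow_add hsp,
      show (8/κ - 2 + (1 - 4/κ + (1 - 4/κ)) : ℝ) = 0 by ring, Real.rpow_zero]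
  have hdne : (s ^ (2/κ) * (1 - s) ^ (2/κ)) ≠ 0 :=
    ne_of_gt (mul_pos (Real.rpow_pos_of_pos hsp _) (Real.rpow_pos_of_pos h1s _))
  rw [hN, hD, e1, e2]
  exact (SLEalg hdne e3).symm
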